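/- Quantum Zeno dynamics by fast oscillations projecting an arbitrary generator: let K be an n×n Hermitian complex matrix with spectral resolution K = Σ_n ε_n P_n, let 𝒦 = [K, •] be its commutator superoperator, and define for each transition frequency ω ∈ Ω = {ε_m − ε_n} the projection 𝒫_ω(A) = Σ_{(m,n) : ε_m − ε_n = ω} P_m A P_n. Let ℒ be an arbitrary linear endomorphism of the space of n×n complex matrices and set ℒ_Z = Σ_{ω ∈ Ω} 𝒫_ω ∘ ℒ ∘ 𝒫_ω. Then for every T > 0 there exists a constant c ≥ 0 such that for all γ ≥ 1 and all t ∈ [0, T], ‖exp(t(−iγ𝒦 + ℒ)) − exp(−itγ𝒦)∘exp(tℒ_Z)‖ ≤ c/γ. -/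

import Mathlib

attribute [local instance] Matrix.linftyOpNormedRing Matrix.linftyOpNormedAlgebra

open NormedSpace Finset

noncomputable section


set_option maxHeartbeats 1000000
set_option synthInstance.maxHeartbeats 1000000

section ZenoAux

variable {E : Type*} [NormedRing E] [NormedAlgebra ℂ E] [CompleteSpace E]


theorem zeno_KQ (Ω : Finset ℝ) (Q : ℝ → E) (K : E)
    (hQmul : ∀ ω ∈ Ω, ∀ ω' ∈ Ω, Q ω * Q ω' = if ω = ω' then Q ω else 0)
    (hKs : K = ∑ ω ∈ Ω, (ω : ℂ) • Q ω) :
    ∀ ω ∈ Ω, K * Q ω = (ω : ℂ) • Q ω := by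
  intro ω hω
  rw [hKs, Finset.sum_mul]
  rw [Finset.sum_eq_single ω]
  · rw [smul_mul_assoc, hQmul ω hω ω hω, if_pos rfl]
  · intro b hb hne
    rw [smul_mul_assoc, hQmul b hb ω hω, if_neg hne, smul_zero]
  · intro h; exact absurd hω h

theorem zeno_expK (Ω : Finset ℝ) (Q : ℝ → E) (K : E)
    (hQmul : ∀ ω ∈ Ω, ∀ ω' ∈ Ω, Q ω * Q ω' = if ω = ω' then Q ω else 0)
    (hQsum : ∑ ω ∈ Ω, Q ω = 1)
    (hKs : K = ∑ ω ∈ Ω, (ω : ℂ) • Q ω) :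
    ∀ x : ℝ, exp ((Complex.I * x) • K) = ∑ ω ∈ Ω, Complex.exp (Complex.I * x * ω) • Q ω := by
  letI : NormedAlgebra ℚ E := NormedAlgebra.restrictScalars ℚ ℂ E
  have hKQ := zeno_KQ Ω Q K hQmul hKs
  set f : ℝ → E := fun x => ∑ ω ∈ Ω, Complex.exp (Complex.I * x * ω) • Q ω with hf
  set g : ℝ → E := fun x => exp ((-(Complex.I * x)) • K) * f x with hg
  have hu : ∀ x : ℝ, HasDerivAt (fun x : ℝ => exp ((-(Complex.I * x)) • K))
      ((-Complex.I) • (exp ((-(Complex.I * x)) • K) * K)) x := by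
    intro x
    have h1 : HasDerivAt (fun z : ℂ => exp (z • K))
        (exp ((-(Complex.I * x)) • K) * K) (-(Complex.I * x)) :=
      hasDerivAt_exp_smul_const K _
    have h2 : HasDerivAt (fun x : ℝ => -(Complex.I * (x : ℂ))) (-Complex.I) x := by
      simpa using ((hasDerivAt_id x).ofReal_comp.const_mul Complex.I).fun_neg
    exact h1.scomp x h2
  have hfd : ∀ x : ℝ, HasDerivAt f
      (∑ ω ∈ Ω, (Complex.I * ω * Complex.exp (Complex.I * x * ω)) • Q ω) x := by
    intro x
    apply HasDerivAt.fun_sum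
    intro ω _
    have h2 : HasDerivAt (fun x : ℝ => Complex.I * (x : ℂ) * ω) (Complex.I * ω) x := by
      simpa [mul_comm, mul_assoc, mul_left_comm] using
        ((hasDerivAt_id x).ofReal_comp.const_mul (Complex.I * ω))
    have h3 : HasDerivAt (fun x : ℝ => Complex.exp (Complex.I * x * ω))
        (Complex.I * ω * Complex.exp (Complex.I * x * ω)) x := by
      have := (Complex.hasDerivAt_exp (Complex.I * x * ω)).scomp x h2
      simpa [mul_comm, Function.comp_def] using this
    exact h3.smul_const (Q ω)
  have hgd : ∀ x : ℝ, HasDerivAt g 0 x := by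
    intro x
    have := (hu x).mul (hfd x)
    have hKf : K * f x = ∑ ω ∈ Ω, (ω * Complex.exp (Complex.I * x * ω)) • Q ω := by
      rw [hf, Finset.mul_sum]
      refine Finset.sum_congr rfl fun ω hω => ?_
      rw [mul_smul_comm, hKQ ω hω, smul_smul, mul_comm]
    have hz : (-Complex.I) • (K * f x)
        + ∑ ω ∈ Ω, (Complex.I * ω * Complex.exp (Complex.I * x * ω)) • Q ω = 0 := by
      rw [hKf, Finset.smul_sum, ← Finset.sum_add_distrib]
      refine Finset.sum_eq_zero fun ω hω => ?_
      rw [smul_smul, ← add_smul]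
      convert zero_smul ℂ (Q ω) using 2
      ring
    have h0 : (-Complex.I) • (exp ((-(Complex.I * x)) • K) * K) * f x
        + exp ((-(Complex.I * x)) • K)
          * ∑ ω ∈ Ω, (Complex.I * ω * Complex.exp (Complex.I * x * ω)) • Q ω = 0 := by
      rw [smul_mul_assoc, mul_assoc, ← mul_smul_comm, ← mul_add, hz, mul_zero]
    exact h0 ▸ this
  have hconst : ∀ x : ℝ, g x = g 0 := by
    intro x
    exact is_const_of_deriv_eq_zero (fun x => (hgd x).differentiableAt)
      (fun x => (hgd x).deriv) x 0
  have hg0 : g 0 = 1 := by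
    simp [hg, hf, hQsum]
  intro x
  have hinv : exp ((Complex.I * x) • K) * exp ((-(Complex.I * x)) • K) = 1 := by
    rw [← exp_add_of_commute (Commute.smul_right (Commute.smul_left (Commute.refl K) _) _)]
    simp
  calc exp ((Complex.I * x) • K) = exp ((Complex.I * x) • K) * g x := by
        rw [hconst x, hg0, mul_one]
    _ = (exp ((Complex.I * x) • K) * exp ((-(Complex.I * x)) • K)) * f x := by
        rw [hg, mul_assoc]
    _ = f x := by rw [hinv, one_mul]



theorem zeno_abstract (Ω : Finset ℝ) (Q : ℝ → E) (K L : E)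
    (hQmul : ∀ ω ∈ Ω, ∀ ω' ∈ Ω, Q ω * Q ω' = if ω = ω' then Q ω else 0)
    (hQsum : ∑ ω ∈ Ω, Q ω = 1)
    (hKs : K = ∑ ω ∈ Ω, (ω : ℂ) • Q ω) (T : ℝ) (hT : 0 < T)
    (hexpK : ∀ x : ℝ, exp ((Complex.I * x) • K)
      = ∑ ω ∈ Ω, Complex.exp (Complex.I * x * ω) • Q ω) :
    ∃ c ≥ (0:ℝ), ∀ γ ≥ (1:ℝ), ∀ t ∈ Set.Icc (0:ℝ) T,
      ‖exp ((-(Complex.I * t * γ)) • K + (t:ℂ) • L) -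
        exp ((-(Complex.I * t * γ)) • K)
          * exp ((t:ℂ) • ∑ ω ∈ Ω, Q ω * L * Q ω)‖ ≤ c / γ := by
  letI : NormedAlgebra ℚ E := NormedAlgebra.restrictScalars ℚ ℂ E
  set LZ : E := ∑ ω ∈ Ω, Q ω * L * Q ω with hLZ
  -- basic constants
  set CQ : ℝ := ∑ ω ∈ Ω, ‖Q ω‖ with hCQ
  have hCQ0 : 0 ≤ CQ := Finset.sum_nonneg fun _ _ => norm_nonneg _
  have hexpn : ∀ x : ℝ, ‖exp ((Complex.I * x) • K)‖ ≤ CQ := by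
    intro x
    rw [hexpK x]
    refine le_trans (norm_sum_le _ _) (Finset.sum_le_sum fun ω _ => ?_)
    rw [norm_smul]
    have : ‖Complex.exp (Complex.I * x * ω)‖ = 1 := by
      have : Complex.I * (x:ℂ) * ω = ((x*ω : ℝ):ℂ) * Complex.I := by push_cast; ring
      rw [this]
      exact Complex.norm_exp_ofReal_mul_I _
    rw [this, one_mul]
  have hexpadd : ∀ a b : ℂ, exp (a • K) * exp (b • K) = exp ((a+b) • K) := by
    intro a b
    rw [add_smul]
    exact (exp_add_of_commute (((Commute.refl K).smul_left a).smul_right b)).symm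
  -- LZ commutes with everything spectral
  have hLZV : ∀ z : ℂ, LZ * exp (z • LZ) = exp (z • LZ) * LZ :=
    fun z => (((Commute.refl LZ).smul_right z).exp_right).eq
  set V : ℝ → E := fun x => exp ((x:ℂ) • LZ) with hV
  have hVd : ∀ x : ℝ, HasDerivAt V (LZ * V x) x := by
    intro x
    have h1 := hasDerivAt_exp_smul_const' LZ (x:ℂ)
    have := h1.scomp x (hasDerivAt_id x).ofReal_comp
    simpa [Function.comp_def, hV] using this
  have hVcont : Continuous V := by
    rw [continuous_iff_continuousAt]; exact fun x => (hVd x).continuousAt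
  obtain ⟨CV0, hCV0⟩ := (isCompact_Icc (a := (0:ℝ)) (b := T)).exists_bound_of_continuousOn
    hVcont.norm.continuousOn
  set CV : ℝ := max CV0 0 with hCVdef
  have hCVbound : ∀ x ∈ Set.Icc (0:ℝ) T, ‖V x‖ ≤ CV :=
    fun x hx => le_trans (le_trans (le_abs_self _) (Real.norm_eq_abs _ ▸ hCV0 x hx)) (le_max_left _ _)
  have hCVnn : 0 ≤ CV := le_max_right _ _
  set CM : ℝ := CQ * (‖L‖ * CQ) with hCM
  have hCMnn : 0 ≤ CM := mul_nonneg hCQ0 (mul_nonneg (norm_nonneg _) hCQ0)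
  set CW : ℝ := ‖(1:E)‖ * Real.exp (CM * T) with hCW
  have hCWnn : 0 ≤ CW := mul_nonneg (norm_nonneg _) (Real.exp_nonneg _)
  set pairs : Finset (ℝ × ℝ) := (Ω ×ˢ Ω).filter (fun p => p.1 ≠ p.2) with hpairs
  set cp : ℝ × ℝ → ℝ := fun p =>
    (2*(CV*(‖Q p.1 * L * Q p.2‖*CW)) +
      T*(CV*(‖Q p.1 * L * Q p.2‖*(CM*CW)) + CV*(‖LZ‖*(‖Q p.1 * L * Q p.2‖*CW))))
      / |p.1 - p.2| with hcp
  have hcpnn : ∀ p, 0 ≤ cp p := by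
    intro p
    apply div_nonneg _ (abs_nonneg _)
    have h1 : (0:ℝ) ≤ ‖Q p.1 * L * Q p.2‖ := norm_nonneg _
    positivity
  refine ⟨CQ * ∑ p ∈ pairs, cp p, mul_nonneg hCQ0 (Finset.sum_nonneg fun p _ => hcpnn p), ?_⟩
  intro γ hγ t ht
  obtain ⟨ht0, htT⟩ := ht
  have hγ0 : (0:ℝ) < γ := lt_of_lt_of_le one_pos hγ
  set B : E := (-(Complex.I * γ)) • K + L with hB
  set W : ℝ → E := fun s => exp ((Complex.I * s * γ) • K) * exp ((s:ℂ) • B) with hW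
  -- phase rewriting helpers
  have hph : ∀ s : ℝ, Complex.I * (s:ℂ) * (γ:ℂ) = Complex.I * ((s*γ : ℝ):ℂ) := by
    intro s; push_cast; ring
  have hphn : ∀ s : ℝ, -(Complex.I * (s:ℂ) * (γ:ℂ)) = Complex.I * ((-(s*γ) : ℝ):ℂ) := by
    intro s; push_cast; ring
  have hexpnK : ∀ s : ℝ, ‖exp ((Complex.I * s * γ) • K)‖ ≤ CQ := by
    intro s; rw [hph s]; exact hexpn _
  have hexpnK' : ∀ s : ℝ, ‖exp ((-(Complex.I * s * γ)) • K)‖ ≤ CQ := by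
    intro s; rw [hphn s]; exact hexpn _
  -- derivative of W
  have hBsplit : ∀ y : E, B * y = (-(Complex.I * γ)) • (K * y) + L * y := by
    intro y; rw [hB, add_mul, smul_mul_assoc]
  have hBexp : ∀ s : ℝ, exp ((s:ℂ) • B) * B = B * exp ((s:ℂ) • B) :=
    fun s => (((Commute.refl B).smul_right ((s:ℝ):ℂ)).exp_right).eq.symm
  have hWd : ∀ s : ℝ, HasDerivAt W
      (exp ((Complex.I * s * γ) • K) * (L * exp ((s:ℂ) • B))) s := by
    intro s
    have hA : HasDerivAt (fun s : ℝ => exp ((Complex.I * s * γ) • K))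
        ((Complex.I * γ) • (exp ((Complex.I * s * γ) • K) * K)) s := by
      have h2 : HasDerivAt (fun s : ℝ => Complex.I * (s:ℂ) * (γ:ℂ)) (Complex.I * γ) s := by
        have := ((hasDerivAt_id s).ofReal_comp.const_mul Complex.I).mul_const (γ:ℂ)
        simpa using this
      exact (hasDerivAt_exp_smul_const K (Complex.I * s * γ)).scomp s h2
    have hBd : HasDerivAt (fun s : ℝ => exp ((s:ℂ) • B)) (exp ((s:ℂ) • B) * B) s := by
      have := (hasDerivAt_exp_smul_const B ((s:ℝ):ℂ)).scomp s (hasDerivAt_id s).ofReal_comp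
      simpa [Function.comp_def] using this
    have h := hA.mul hBd
    have h0 : (Complex.I * γ) • (exp ((Complex.I * s * γ) • K) * K) * exp ((s:ℂ) • B)
        + exp ((Complex.I * s * γ) • K) * (exp ((s:ℂ) • B) * B)
        = exp ((Complex.I * s * γ) • K) * (L * exp ((s:ℂ) • B)) := by
      rw [hBexp s, hBsplit (exp ((s:ℂ) • B)), smul_mul_assoc, mul_assoc, ← mul_smul_comm,
        ← mul_add, ← add_assoc, ← add_smul]
      norm_num
    exact h0 ▸ h
  -- exp(s•B) in terms of W
  have hEB : ∀ s : ℝ, exp ((s:ℂ) • B) = exp ((-(Complex.I * s * γ)) • K) * W s := by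
    intro s
    rw [hW]
    rw [← mul_assoc, hexpadd]
    norm_num
  -- Gronwall-type bound for the derivative
  have hWdn : ∀ s : ℝ, ‖exp ((Complex.I * s * γ) • K) * (L * exp ((s:ℂ) • B))‖
      ≤ CM * ‖W s‖ := by
    intro s
    rw [hEB s]
    calc ‖exp ((Complex.I * s * γ) • K) *
          (L * (exp ((-(Complex.I * s * γ)) • K) * W s))‖
        ≤ ‖exp ((Complex.I * s * γ) • K)‖ *
          (‖L‖ * (‖exp ((-(Complex.I * s * γ)) • K)‖ * ‖W s‖)) := by
          refine le_trans (norm_mul_le _ _) ?_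
          refine mul_le_mul_of_nonneg_left (le_trans (norm_mul_le _ _) ?_) (norm_nonneg _)
          exact mul_le_mul_of_nonneg_left (norm_mul_le _ _) (norm_nonneg _)
      _ ≤ CQ * (‖L‖ * (CQ * ‖W s‖)) := by
          refine mul_le_mul (hexpnK s) ?_ (by positivity) hCQ0
          refine mul_le_mul_of_nonneg_left ?_ (norm_nonneg _)
          exact mul_le_mul_of_nonneg_right (hexpnK' s) (norm_nonneg _)
      _ = CM * ‖W s‖ := by rw [hCM]; ring
  have hW0 : W 0 = 1 := by
    rw [hW]; norm_num
  have hWn : ∀ s ∈ Set.Icc (0:ℝ) T, ‖W s‖ ≤ CW := by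
    have hgr := norm_le_gronwallBound_of_norm_deriv_right_le (E := E)
      (f := W) (f' := fun s => exp ((Complex.I * s * γ) • K) * (L * exp ((s:ℂ) • B)))
      (δ := ‖(1:E)‖) (K := CM) (ε := 0) (a := 0) (b := T)
      (Continuous.continuousOn (by
        rw [continuous_iff_continuousAt]
        exact fun s => (hWd s).continuousAt))
      (fun s _ => (hWd s).hasDerivWithinAt)
      (by rw [hW0])
      (fun s _ => by rw [add_zero]; exact hWdn s)
    intro s hs
    refine le_trans (hgr s hs) ?_
    rw [gronwallBound_ε0, sub_zero, hCW]
    refine mul_le_mul_of_nonneg_left (Real.exp_le_exp.mpr ?_) (norm_nonneg _)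
    exact mul_le_mul_of_nonneg_left hs.2 hCMnn
  -- Duhamel
  have hVs : ∀ s : ℝ, HasDerivAt (fun s : ℝ => V (t - s)) (-(LZ * V (t - s))) s := by
    intro s
    have h2 := (hVd (t - s)).scomp s ((hasDerivAt_id s).const_sub t)
    rw [neg_smul, one_smul] at h2
    exact h2
  have hLZVr : ∀ x : ℝ, LZ * V x = V x * LZ := fun x => hLZV _
  have hHd : ∀ s : ℝ, HasDerivAt (fun s => V (t - s) * W s)
      (V (t - s) * (exp ((Complex.I * s * γ) • K) * (L * exp ((s:ℂ) • B)) - LZ * W s)) s := by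
    intro s
    have h := (hVs s).mul (hWd s)
    have h0 : -(LZ * V (t - s)) * W s
        + V (t - s) * (exp ((Complex.I * s * γ) • K) * (L * exp ((s:ℂ) • B)))
        = V (t - s) * (exp ((Complex.I * s * γ) • K) * (L * exp ((s:ℂ) • B)) - LZ * W s) := by
      rw [mul_sub, hLZVr (t - s), neg_mul, mul_assoc, neg_add_eq_sub]
    exact h0 ▸ h
  -- continuity facts
  have hcEK : Continuous fun s : ℝ => exp ((Complex.I * s * γ) • K) :=
    exp_continuous.comp
      (((continuous_const.mul Complex.continuous_ofReal).mul continuous_const).smul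
        continuous_const)
  have hcEB : Continuous fun s : ℝ => exp ((s:ℂ) • B) :=
    exp_continuous.comp (Complex.continuous_ofReal.smul continuous_const)
  have hcW : Continuous W := hcEK.mul hcEB
  have hcVt : Continuous fun s : ℝ => V (t - s) :=
    hVcont.comp (continuous_const.sub continuous_id)
  have hcL : Continuous fun s : ℝ => L * exp ((s:ℂ) • B) := continuous_const.mul hcEB
  have hcInt : Continuous fun s : ℝ =>
      V (t - s) * (exp ((Complex.I * s * γ) • K) * (L * exp ((s:ℂ) • B)) - LZ * W s) :=
    hcVt.mul ((hcEK.mul hcL).sub (continuous_const.mul hcW))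
  have hV0 : V 0 = 1 := by rw [hV]; norm_num
  have hftc : W t - V t = ∫ s in (0:ℝ)..t,
      V (t - s) * (exp ((Complex.I * s * γ) • K) * (L * exp ((s:ℂ) • B)) - LZ * W s) := by
    have h := intervalIntegral.integral_eq_sub_of_hasDerivAt (f := fun s => V (t - s) * W s)
      (f' := fun s => V (t - s) *
        (exp ((Complex.I * s * γ) • K) * (L * exp ((s:ℂ) • B)) - LZ * W s))
      (fun s _ => hHd s) (hcInt.intervalIntegrable 0 t)
    rw [h]
    simp [hV0, hW0]
  -- spectral decomposition of the conjugated generator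
  have hMsum : ∀ s : ℝ,
      exp ((Complex.I * s * γ) • K) * L * exp ((-(Complex.I * s * γ)) • K)
      = ∑ ω ∈ Ω, ∑ ω' ∈ Ω,
          Complex.exp (Complex.I * s * γ * ((ω:ℂ) - (ω':ℂ))) • (Q ω * L * Q ω') := by
    intro s
    rw [hphn s, hph s, hexpK, hexpK, Finset.sum_mul, Finset.sum_mul_sum]
    refine Finset.sum_congr rfl fun ω _ => Finset.sum_congr rfl fun ω' _ => ?_
    simp only [smul_mul_assoc, mul_smul_comm, smul_smul]
    congr 1
    rw [← Complex.exp_add]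
    congr 1
    push_cast
    ring
  have hsplit : ∀ s : ℝ,
      ∑ p ∈ pairs, Complex.exp (Complex.I * s * γ * ((p.1:ℂ) - (p.2:ℂ))) • (Q p.1 * L * Q p.2)
      = (∑ ω ∈ Ω, ∑ ω' ∈ Ω,
          Complex.exp (Complex.I * s * γ * ((ω:ℂ) - (ω':ℂ))) • (Q ω * L * Q ω')) - LZ := by
    intro s
    rw [hpairs, Finset.sum_filter, Finset.sum_product, hLZ, ← Finset.sum_sub_distrib]
    refine Finset.sum_congr rfl fun ω hω => ?_
    have hdd : ∀ ω' : ℝ,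
        (if ω ≠ ω' then Complex.exp (Complex.I * s * γ * ((ω:ℂ) - (ω':ℂ))) • (Q ω * L * Q ω')
          else 0)
        = Complex.exp (Complex.I * s * γ * ((ω:ℂ) - (ω':ℂ))) • (Q ω * L * Q ω')
          - (if ω = ω' then Complex.exp (Complex.I * s * γ * ((ω:ℂ) - (ω':ℂ))) • (Q ω * L * Q ω')
            else 0) := by
      intro ω'
      by_cases h : ω = ω' <;> simp [h]
    rw [Finset.sum_congr rfl fun ω' _ => hdd ω', Finset.sum_sub_distrib,
      Finset.sum_ite_eq Ω ω, if_pos hω]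
    congr 1
    simp
  have hintegrand : ∀ s : ℝ,
      V (t - s) * (exp ((Complex.I * s * γ) • K) * (L * exp ((s:ℂ) • B)) - LZ * W s)
      = ∑ p ∈ pairs, Complex.exp (Complex.I * s * γ * ((p.1:ℂ) - (p.2:ℂ)))
          • (V (t - s) * (Q p.1 * L * Q p.2 * W s)) := by
    intro s
    have h1 : exp ((Complex.I * s * γ) • K) * (L * exp ((s:ℂ) • B))
        = (exp ((Complex.I * s * γ) • K) * L * exp ((-(Complex.I * s * γ)) • K)) * W s := by
      rw [hEB s, ← mul_assoc, ← mul_assoc]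
    rw [h1, hMsum s, ← sub_mul, ← hsplit s, Finset.sum_mul, Finset.mul_sum]
    refine Finset.sum_congr rfl fun p _ => ?_
    rw [smul_mul_assoc, mul_smul_comm, mul_assoc]
  have hcphase : ∀ p : ℝ × ℝ,
      Continuous fun s : ℝ => Complex.exp (Complex.I * s * γ * ((p.1:ℂ) - (p.2:ℂ))) :=
    fun p => Complex.continuous_exp.comp
      ((((continuous_const.mul Complex.continuous_ofReal).mul continuous_const).mul
        continuous_const))
  have hphase1 : ∀ (p : ℝ × ℝ) (s : ℝ),
      ‖Complex.exp (Complex.I * s * γ * ((p.1:ℂ) - (p.2:ℂ)))‖ = 1 := by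
    intro p s
    have : Complex.I * (s:ℂ) * γ * ((p.1:ℂ) - (p.2:ℂ))
        = ((s * γ * (p.1 - p.2) : ℝ) : ℂ) * Complex.I := by push_cast; ring
    rw [this]
    exact Complex.norm_exp_ofReal_mul_I _
  have hWVt : W t - V t = ∑ p ∈ pairs, ∫ s in (0:ℝ)..t,
      Complex.exp (Complex.I * s * γ * ((p.1:ℂ) - (p.2:ℂ)))
        • (V (t - s) * (Q p.1 * L * Q p.2 * W s)) := by
    rw [hftc, intervalIntegral.integral_congr (fun s _ => hintegrand s)]
    exact intervalIntegral.integral_finset_sum fun p _ =>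
      (((hcphase p).smul (hcVt.mul (continuous_const.mul hcW)))).intervalIntegrable 0 t
  have hpairbound : ∀ p ∈ pairs, ‖∫ s in (0:ℝ)..t,
      Complex.exp (Complex.I * s * γ * ((p.1:ℂ) - (p.2:ℂ)))
        • (V (t - s) * (Q p.1 * L * Q p.2 * W s))‖ ≤ cp p / γ := by
    intro p hp
    obtain ⟨hpΩ, hpne⟩ := Finset.mem_filter.mp (hpairs ▸ hp)
    have hδ0 : p.1 - p.2 ≠ 0 := sub_ne_zero.mpr hpne
    have hδpos : 0 < |p.1 - p.2| := abs_pos.mpr hδ0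
    set C : E := Q p.1 * L * Q p.2 with hC
    set z : ℂ := Complex.I * γ * ((p.1:ℂ) - (p.2:ℂ)) with hz
    have hzcast : ((p.1:ℂ) - (p.2:ℂ)) = ((p.1 - p.2 : ℝ) : ℂ) := by push_cast; ring
    have hz0 : z ≠ 0 := by
      rw [hz, hzcast]
      exact mul_ne_zero (mul_ne_zero Complex.I_ne_zero
        (by exact_mod_cast ne_of_gt hγ0)) (by exact_mod_cast hδ0)
    have hznorm : ‖z‖ = γ * |p.1 - p.2| := by
      rw [hz, hzcast, norm_mul, norm_mul, Complex.norm_I, one_mul, Complex.norm_real,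
        Complex.norm_real, Real.norm_eq_abs, Real.norm_eq_abs, abs_of_pos hγ0]
    set F : ℝ → E := fun s => V (t - s) * (C * W s) with hF
    set F' : ℝ → E := fun s =>
      V (t - s) * (C * (exp ((Complex.I * s * γ) • K) * (L * exp ((s:ℂ) • B))))
        - V (t - s) * (LZ * (C * W s)) with hF'
    have hFd : ∀ s : ℝ, HasDerivAt F (F' s) s := by
      intro s
      have h := (hVs s).mul ((hWd s).const_mul C)
      have h0 : -(LZ * V (t - s)) * (C * W s)
          + V (t - s) * (C * (exp ((Complex.I * s * γ) • K) * (L * exp ((s:ℂ) • B))))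
          = F' s := by
        rw [hF', neg_mul, hLZVr (t - s), mul_assoc, neg_add_eq_sub]
      exact h0 ▸ h
    have hphased : ∀ s : ℝ, HasDerivAt
        (fun s : ℝ => Complex.exp (Complex.I * s * γ * ((p.1:ℂ) - (p.2:ℂ))))
        (z * Complex.exp (Complex.I * s * γ * ((p.1:ℂ) - (p.2:ℂ)))) s := by
      intro s
      have hlin : HasDerivAt (fun s : ℝ => Complex.I * (s:ℂ) * (γ:ℂ) * ((p.1:ℂ) - (p.2:ℂ)))
          z s := by
        have := (((hasDerivAt_id s).ofReal_comp.const_mul Complex.I).mul_const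
          ((γ:ℝ):ℂ)).mul_const ((p.1:ℂ) - (p.2:ℂ))
        simpa [hz] using this
      have := (Complex.hasDerivAt_exp _).scomp s hlin
      simpa [smul_eq_mul, Function.comp_def] using this
    have hGd : ∀ s : ℝ, HasDerivAt
        (fun s : ℝ => z⁻¹ • (Complex.exp (Complex.I * s * γ * ((p.1:ℂ) - (p.2:ℂ))) • F s))
        (Complex.exp (Complex.I * s * γ * ((p.1:ℂ) - (p.2:ℂ))) • F s
          + z⁻¹ • (Complex.exp (Complex.I * s * γ * ((p.1:ℂ) - (p.2:ℂ))) • F' s)) s := by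
      intro s
      have h := ((hphased s).smul (hFd s)).const_smul z⁻¹
      have h0 : z⁻¹ • ((z * Complex.exp (Complex.I * s * γ * ((p.1:ℂ) - (p.2:ℂ)))) • F s
          + Complex.exp (Complex.I * s * γ * ((p.1:ℂ) - (p.2:ℂ))) • F' s)
          = Complex.exp (Complex.I * s * γ * ((p.1:ℂ) - (p.2:ℂ))) • F s
            + z⁻¹ • (Complex.exp (Complex.I * s * γ * ((p.1:ℂ) - (p.2:ℂ))) • F' s) := by
        rw [smul_add, smul_smul, ← mul_assoc, inv_mul_cancel₀ hz0, one_mul]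
      have h1 : Complex.exp (Complex.I * s * γ * ((p.1:ℂ) - (p.2:ℂ))) • F' s
          + (z * Complex.exp (Complex.I * s * γ * ((p.1:ℂ) - (p.2:ℂ)))) • F s
          = (z * Complex.exp (Complex.I * s * γ * ((p.1:ℂ) - (p.2:ℂ)))) • F s
            + Complex.exp (Complex.I * s * γ * ((p.1:ℂ) - (p.2:ℂ))) • F' s := add_comm _ _
      rw [h1] at h
      exact h0 ▸ h
    have hcF : Continuous F := hcVt.mul (continuous_const.mul hcW)
    have hcF' : Continuous F' :=
      (hcVt.mul (continuous_const.mul (hcEK.mul hcL))).sub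
        (hcVt.mul (continuous_const.mul (continuous_const.mul hcW)))
    have hint1 : IntervalIntegrable
        (fun s => Complex.exp (Complex.I * s * γ * ((p.1:ℂ) - (p.2:ℂ))) • F s)
        MeasureTheory.volume 0 t := ((hcphase p).smul hcF).intervalIntegrable 0 t
    have hint2 : IntervalIntegrable
        (fun s => z⁻¹ • (Complex.exp (Complex.I * s * γ * ((p.1:ℂ) - (p.2:ℂ))) • F' s))
        MeasureTheory.volume 0 t :=
      (((hcphase p).smul hcF').const_smul z⁻¹).intervalIntegrable 0 t
    have hftc2 := intervalIntegral.integral_eq_sub_of_hasDerivAt (fun s _ => hGd s)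
      (hint1.add hint2)
    rw [intervalIntegral.integral_add hint1 hint2] at hftc2
    have hsplitint : (∫ s in (0:ℝ)..t,
        Complex.exp (Complex.I * s * γ * ((p.1:ℂ) - (p.2:ℂ))) • F s)
        = (z⁻¹ • (Complex.exp (Complex.I * t * γ * ((p.1:ℂ) - (p.2:ℂ))) • F t)
            - z⁻¹ • (Complex.exp (Complex.I * 0 * γ * ((p.1:ℂ) - (p.2:ℂ))) • F 0))
          - z⁻¹ • ∫ s in (0:ℝ)..t,
              Complex.exp (Complex.I * s * γ * ((p.1:ℂ) - (p.2:ℂ))) • F' s := by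
      rw [← intervalIntegral.integral_smul]
      rw [eq_sub_iff_add_eq, hftc2]
      norm_num
    -- norm bounds
    have hFb : ∀ s ∈ Set.Icc (0:ℝ) t, ‖F s‖ ≤ CV * (‖C‖ * CW) := by
      intro s hs
      have hsT : s ∈ Set.Icc (0:ℝ) T := ⟨hs.1, le_trans hs.2 htT⟩
      have hts : t - s ∈ Set.Icc (0:ℝ) T := ⟨by linarith [hs.2], by linarith [hs.1]⟩
      calc ‖V (t - s) * (C * W s)‖ ≤ ‖V (t - s)‖ * (‖C‖ * ‖W s‖) :=
            le_trans (norm_mul_le _ _)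
              (mul_le_mul_of_nonneg_left (norm_mul_le _ _) (norm_nonneg _))
        _ ≤ CV * (‖C‖ * CW) := by
            refine mul_le_mul (hCVbound _ hts) ?_ (by positivity) hCVnn
            exact mul_le_mul_of_nonneg_left (hWn s hsT) (norm_nonneg _)
    have hF'b : ∀ s ∈ Set.Icc (0:ℝ) t,
        ‖F' s‖ ≤ CV * (‖C‖ * (CM * CW)) + CV * (‖LZ‖ * (‖C‖ * CW)) := by
      intro s hs
      have hsT : s ∈ Set.Icc (0:ℝ) T := ⟨hs.1, le_trans hs.2 htT⟩
      have hts : t - s ∈ Set.Icc (0:ℝ) T := ⟨by linarith [hs.2], by linarith [hs.1]⟩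
      refine le_trans (norm_sub_le _ _) (add_le_add ?_ ?_)
      · calc ‖V (t - s) * (C * (exp ((Complex.I * s * γ) • K)
              * (L * exp ((s:ℂ) • B))))‖
            ≤ ‖V (t - s)‖ * (‖C‖
              * ‖exp ((Complex.I * s * γ) • K) * (L * exp ((s:ℂ) • B))‖) :=
              le_trans (norm_mul_le _ _)
                (mul_le_mul_of_nonneg_left (norm_mul_le _ _) (norm_nonneg _))
          _ ≤ CV * (‖C‖ * (CM * CW)) := by
              refine mul_le_mul (hCVbound _ hts) ?_ (by positivity) hCVnn
              refine mul_le_mul_of_nonneg_left ?_ (norm_nonneg _)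
              exact le_trans (hWdn s) (mul_le_mul_of_nonneg_left (hWn s hsT) hCMnn)
      · calc ‖V (t - s) * (LZ * (C * W s))‖
            ≤ ‖V (t - s)‖ * (‖LZ‖ * (‖C‖ * ‖W s‖)) :=
              le_trans (norm_mul_le _ _) (mul_le_mul_of_nonneg_left
                (le_trans (norm_mul_le _ _) (mul_le_mul_of_nonneg_left (norm_mul_le _ _)
                  (norm_nonneg _))) (norm_nonneg _))
          _ ≤ CV * (‖LZ‖ * (‖C‖ * CW)) := by
              refine mul_le_mul (hCVbound _ hts) ?_ (by positivity) hCVnn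
              refine mul_le_mul_of_nonneg_left ?_ (norm_nonneg _)
              exact mul_le_mul_of_nonneg_left (hWn s hsT) (norm_nonneg _)
    have hintb : ‖∫ s in (0:ℝ)..t,
        Complex.exp (Complex.I * s * γ * ((p.1:ℂ) - (p.2:ℂ))) • F' s‖
        ≤ (CV * (‖C‖ * (CM * CW)) + CV * (‖LZ‖ * (‖C‖ * CW))) * T := by
      have h := intervalIntegral.norm_integral_le_of_norm_le_const
        (C := CV * (‖C‖ * (CM * CW)) + CV * (‖LZ‖ * (‖C‖ * CW)))
        (f := fun s => Complex.exp (Complex.I * s * γ * ((p.1:ℂ) - (p.2:ℂ))) • F' s)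
        (a := 0) (b := t) ?_
      · refine le_trans h ?_
        rw [sub_zero, _root_.abs_of_nonneg ht0]
        refine mul_le_mul_of_nonneg_left htT ?_
        have : (0:ℝ) ≤ ‖C‖ := norm_nonneg _
        positivity
      · intro x hx
        rw [Set.uIoc_of_le ht0] at hx
        rw [norm_smul, hphase1 p x, one_mul]
        exact hF'b x ⟨le_of_lt hx.1, hx.2⟩
    have hGb : ∀ s ∈ Set.Icc (0:ℝ) t,
        ‖z⁻¹ • (Complex.exp (Complex.I * s * γ * ((p.1:ℂ) - (p.2:ℂ))) • F s)‖
        ≤ ‖z‖⁻¹ * (CV * (‖C‖ * CW)) := by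
      intro s hs
      rw [norm_smul, norm_smul, hphase1 p s, one_mul, norm_inv]
      exact mul_le_mul_of_nonneg_left (hFb s hs) (by positivity)
    have htmem : t ∈ Set.Icc (0:ℝ) t := ⟨ht0, le_refl t⟩
    have h0mem : (0:ℝ) ∈ Set.Icc (0:ℝ) t := ⟨le_refl 0, ht0⟩
    have htotal : ‖∫ s in (0:ℝ)..t,
        Complex.exp (Complex.I * s * γ * ((p.1:ℂ) - (p.2:ℂ))) • F s‖
        ≤ ‖z‖⁻¹ * (CV * (‖C‖ * CW)) + ‖z‖⁻¹ * (CV * (‖C‖ * CW))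
          + ‖z‖⁻¹ * ((CV * (‖C‖ * (CM * CW)) + CV * (‖LZ‖ * (‖C‖ * CW))) * T) := by
      rw [hsplitint]
      refine le_trans (norm_sub_le _ _) (add_le_add (le_trans (norm_sub_le _ _)
        (add_le_add (hGb t htmem) (hGb 0 h0mem))) ?_)
      rw [norm_smul, norm_inv]
      exact mul_le_mul_of_nonneg_left hintb (by positivity)
    refine le_trans htotal (le_of_eq ?_)
    rw [hznorm, hcp, hC]
    have hγne : γ ≠ 0 := ne_of_gt hγ0
    have hδne : |p.1 - p.2| ≠ 0 := ne_of_gt hδpos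
    field_simp
    ring
  -- final assembly
  have hWVn : ‖W t - V t‖ ≤ (∑ p ∈ pairs, cp p) / γ := by
    rw [hWVt, Finset.sum_div]
    exact le_trans (norm_sum_le _ _) (Finset.sum_le_sum hpairbound)
  have hgoal1 : (-(Complex.I * t * γ)) • K + (t:ℂ) • L = (t:ℂ) • B := by
    have h : (-(Complex.I * t * γ)) = (t:ℂ) * (-(Complex.I * γ)) := by ring
    rw [hB, smul_add, smul_smul, ← h]
  have hgoal2 : exp ((-(Complex.I * t * γ)) • K + (t:ℂ) • L)
      - exp ((-(Complex.I * t * γ)) • K) * V t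
      = exp ((-(Complex.I * t * γ)) • K) * (W t - V t) := by
    rw [hgoal1, hEB t, mul_sub]
  calc ‖exp ((-(Complex.I * t * γ)) • K + (t:ℂ) • L)
      - exp ((-(Complex.I * t * γ)) • K) * exp ((t:ℂ) • LZ)‖
      = ‖exp ((-(Complex.I * t * γ)) • K) * (W t - V t)‖ := by rw [← hgoal2]
    _ ≤ CQ * ((∑ p ∈ pairs, cp p) / γ) := by
        refine le_trans (norm_mul_le _ _) ?_
        exact mul_le_mul (hexpnK' t) hWVn (norm_nonneg _) hCQ0
    _ = CQ * (∑ p ∈ pairs, cp p) / γ := by rw [mul_div_assoc]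

end ZenoAux

instance matCLMNormedRing (n : ℕ) :
    NormedRing (Matrix (Fin n) (Fin n) ℂ →L[ℂ] Matrix (Fin n) (Fin n) ℂ) :=
  ContinuousLinearMap.toNormedRing

instance matCLMIsTopologicalRing (n : ℕ) :
    IsTopologicalRing (Matrix (Fin n) (Fin n) ℂ →L[ℂ] Matrix (Fin n) (Fin n) ℂ) :=
  NonUnitalSeminormedRing.toIsTopologicalRing

/-- Quantum Zeno dynamics by fast oscillations, projecting an arbitrary generator:
`‖exp(t(−iγ𝒦 + ℒ)) − exp(−itγ𝒦)∘exp(tℒ_Z)‖ ≤ c/γ` uniformly for `t ∈ [0, T]`,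
where `ℒ_Z = Σ_{ω ∈ Ω} 𝒬 ω ∘ ℒ ∘ 𝒬 ω`. -/
theorem qzd_fast_oscillations_superoperator
    {n r : ℕ} (K : Matrix (Fin n) (Fin n) ℂ) (hK : K.IsHermitian)
    (ε : Fin r → ℝ) (hε : Function.Injective ε)
    (P : Fin r → Matrix (Fin n) (Fin n) ℂ)
    (hPP : ∀ p q, P p * P q = if p = q then P p else 0)
    (hPh : ∀ p, (P p).conjTranspose = P p)
    (hPsum : ∑ p, P p = 1)
    (hKspec : K = ∑ p, (ε p : ℂ) • P p)
    (𝒦 : Matrix (Fin n) (Fin n) ℂ →L[ℂ] Matrix (Fin n) (Fin n) ℂ)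
    (h𝒦 : 𝒦 = LinearMap.toContinuousLinearMap
      (LinearMap.mulLeft ℂ K - LinearMap.mulRight ℂ K))
    (Ω : Finset ℝ)
    (hΩ : Ω = Finset.image (fun pq : Fin r × Fin r => ε pq.1 - ε pq.2) Finset.univ)
    (𝒬 : ℝ → (Matrix (Fin n) (Fin n) ℂ →L[ℂ] Matrix (Fin n) (Fin n) ℂ))
    (h𝒬 : ∀ ω : ℝ, 𝒬 ω = LinearMap.toContinuousLinearMap
      (∑ pq ∈ univ.filter fun pq : Fin r × Fin r => ε pq.1 - ε pq.2 = ω,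
        LinearMap.mulLeft ℂ (P pq.1) * LinearMap.mulRight ℂ (P pq.2)))
    (ℒ : Matrix (Fin n) (Fin n) ℂ →L[ℂ] Matrix (Fin n) (Fin n) ℂ) :
    ∀ T > (0 : ℝ), ∃ c ≥ (0 : ℝ), ∀ γ ≥ (1 : ℝ), ∀ t ∈ Set.Icc (0 : ℝ) T,
      ‖exp ((-(Complex.I * t * γ)) • 𝒦 + (t : ℂ) • ℒ) -
          exp ((-(Complex.I * t * γ)) • 𝒦) *
            exp ((t : ℂ) • ∑ ω ∈ Ω, 𝒬 ω * ℒ * 𝒬 ω)‖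
        ≤ c / γ := by
  classical
  set 𝒯 : Fin r × Fin r → (Matrix (Fin n) (Fin n) ℂ →ₗ[ℂ] Matrix (Fin n) (Fin n) ℂ) :=
    fun pq => LinearMap.mulLeft ℂ (P pq.1) * LinearMap.mulRight ℂ (P pq.2) with h𝒯
  set 𝒮 : ℝ → (Matrix (Fin n) (Fin n) ℂ →ₗ[ℂ] Matrix (Fin n) (Fin n) ℂ) :=
    fun ω => ∑ pq ∈ univ.filter fun pq : Fin r × Fin r => ε pq.1 - ε pq.2 = ω, 𝒯 pq with h𝒮
  have h𝒬' : ∀ ω : ℝ, 𝒬 ω = LinearMap.toContinuousLinearMap (𝒮 ω) := h𝒬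
  have h𝒯apply : ∀ pq X, 𝒯 pq X = P pq.1 * (X * P pq.2) := by
    intro pq X
    simp [h𝒯, Module.End.mul_apply]
  have hterm : ∀ pq p'q' : Fin r × Fin r,
      𝒯 pq * 𝒯 p'q' = if p'q' = pq then 𝒯 pq else 0 := by
    intro pq p'q'
    apply LinearMap.ext; intro X
    rw [Module.End.mul_apply, h𝒯apply, h𝒯apply]
    have h1 : P pq.1 * (P p'q'.1 * (X * P p'q'.2) * P pq.2)
        = (P pq.1 * P p'q'.1) * X * (P p'q'.2 * P pq.2) := by
      simp [mul_assoc]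
    rw [h1, hPP, hPP]
    by_cases hac : pq.1 = p'q'.1 <;> by_cases hdb : p'q'.2 = pq.2
    · have hpp : p'q' = pq := Prod.ext hac.symm hdb
      rw [if_pos hac, if_pos hdb, if_pos hpp, h𝒯apply, hac, mul_assoc, hdb]
    · have hpp : ¬ (p'q' = pq) := fun h => hdb (by rw [h])
      simp [hac, hdb, hpp]
    · have hpp : ¬ (p'q' = pq) := fun h => hac (by rw [h])
      simp [hac, hdb, hpp]
    · have hpp : ¬ (p'q' = pq) := fun h => hac (by rw [h])
      simp [hac, hdb, hpp]
  have hSmul : ∀ ω ω' : ℝ, 𝒮 ω * 𝒮 ω' = if ω = ω' then 𝒮 ω else 0 := by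
    intro ω ω'
    rw [h𝒮]
    rw [Finset.sum_mul_sum]
    by_cases hww : ω = ω'
    · subst hww
      rw [if_pos rfl]
      refine Finset.sum_congr rfl fun pq hpq => ?_
      rw [Finset.sum_congr rfl fun p'q' _ => hterm pq p'q',
        Finset.sum_ite_eq' _ pq _, if_pos hpq]
    · rw [if_neg hww]
      refine Finset.sum_eq_zero fun pq hpq => ?_
      rw [Finset.sum_congr rfl fun p'q' _ => hterm pq p'q',
        Finset.sum_ite_eq' _ pq _, if_neg ?_]
      intro hmem
      exact hww (((Finset.mem_filter.mp hpq).2).symm.trans (Finset.mem_filter.mp hmem).2)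
  have hmaps : ∀ pq : Fin r × Fin r, pq ∈ (univ : Finset (Fin r × Fin r)) →
      ε pq.1 - ε pq.2 ∈ Ω := by
    intro pq _
    rw [hΩ]
    exact Finset.mem_image_of_mem _ (Finset.mem_univ pq)
  have hSsum : ∑ ω ∈ Ω, 𝒮 ω = 1 := by
    rw [h𝒮]
    rw [Finset.sum_fiberwise_of_maps_to hmaps 𝒯]
    apply LinearMap.ext; intro X
    rw [LinearMap.sum_apply]
    rw [Finset.sum_congr rfl fun pq _ => h𝒯apply pq X]
    rw [Fintype.sum_prod_type]
    have h1 : ∀ p : Fin r, ∑ q : Fin r, P p * (X * P q) = P p * X := by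
      intro p
      rw [← Finset.mul_sum, ← Finset.mul_sum, hPsum, mul_one]
    rw [Finset.sum_congr rfl fun p _ => h1 p, ← Finset.sum_mul, hPsum, one_mul]
    rfl
  have hKX : ∀ X : Matrix (Fin n) (Fin n) ℂ,
      K * X = ∑ pq : Fin r × Fin r, (ε pq.1 : ℂ) • (P pq.1 * (X * P pq.2)) := by
    intro X
    rw [Fintype.sum_prod_type]
    have h1 : ∀ p : Fin r, ∑ q : Fin r, (ε p : ℂ) • (P p * (X * P q))
        = (ε p : ℂ) • (P p * X) := by
      intro p
      rw [← Finset.smul_sum, ← Finset.mul_sum, ← Finset.mul_sum, hPsum, mul_one]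
    rw [Finset.sum_congr rfl fun p _ => h1 p, hKspec, Finset.sum_mul]
    exact Finset.sum_congr rfl fun p _ => by rw [smul_mul_assoc]
  have hXK : ∀ X : Matrix (Fin n) (Fin n) ℂ,
      X * K = ∑ pq : Fin r × Fin r, (ε pq.2 : ℂ) • (P pq.1 * (X * P pq.2)) := by
    intro X
    rw [Fintype.sum_prod_type]
    have h1 : ∀ p : Fin r, ∑ q : Fin r, (ε q : ℂ) • (P p * (X * P q))
        = P p * (X * K) := by
      intro p
      rw [hKspec, Finset.mul_sum, Finset.mul_sum]
      refine Finset.sum_congr rfl fun q _ => ?_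
      rw [mul_smul_comm, mul_smul_comm]
    rw [Finset.sum_congr rfl fun p _ => h1 p, ← Finset.sum_mul, hPsum, one_mul]
  have hLMK : LinearMap.mulLeft ℂ K - LinearMap.mulRight ℂ K
      = ∑ ω ∈ Ω, (ω : ℂ) • 𝒮 ω := by
    have h1 : LinearMap.mulLeft ℂ K - LinearMap.mulRight ℂ K
        = ∑ pq : Fin r × Fin r, ((ε pq.1 : ℂ) - (ε pq.2 : ℂ)) • 𝒯 pq := by
      apply LinearMap.ext; intro X
      rw [LinearMap.sub_apply, LinearMap.mulLeft_apply, LinearMap.mulRight_apply,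
        LinearMap.sum_apply, hKX X, hXK X, ← Finset.sum_sub_distrib]
      refine Finset.sum_congr rfl fun pq _ => ?_
      rw [LinearMap.smul_apply, h𝒯apply, sub_smul]
    rw [h1, ← Finset.sum_fiberwise_of_maps_to hmaps
      (fun pq => ((ε pq.1 : ℂ) - (ε pq.2 : ℂ)) • 𝒯 pq)]
    refine Finset.sum_congr rfl fun ω hω => ?_
    rw [h𝒮, Finset.smul_sum]
    refine Finset.sum_congr rfl fun pq hpq => ?_
    have h2 : ε pq.1 - ε pq.2 = ω := (Finset.mem_filter.mp hpq).2
    congr 1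
    rw [← h2]
    push_cast
    ring
  -- transfer to continuous linear maps
  have hQmulC : ∀ ω ω' : ℝ, 𝒬 ω * 𝒬 ω' = if ω = ω' then 𝒬 ω else 0 := by
    intro ω ω'
    ext X
    have h := LinearMap.congr_fun (hSmul ω ω') X
    rw [Module.End.mul_apply] at h
    rw [ContinuousLinearMap.mul_apply, h𝒬' ω, h𝒬' ω',
      LinearMap.coe_toContinuousLinearMap', LinearMap.coe_toContinuousLinearMap', h]
    by_cases hww : ω = ω' <;> simp [hww, h𝒬' ω]
  have hQsumC : ∑ ω ∈ Ω, 𝒬 ω = 1 := by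
    rw [Finset.sum_congr rfl fun ω _ => h𝒬' ω, ← map_sum, hSsum]
    ext X
    simp
  have hKsC : 𝒦 = ∑ ω ∈ Ω, (ω : ℂ) • 𝒬 ω := by
    rw [h𝒦, hLMK, map_sum]
    exact Finset.sum_congr rfl fun ω _ => by rw [map_smul, ← h𝒬' ω]
  intro T hT
  have hKsC' : 𝒦 = ∑ ω ∈ Ω, (ω : ℂ) • 𝒬 ω := hKsC
  letI : NormedAlgebra ℂ (Matrix (Fin n) (Fin n) ℂ →L[ℂ] Matrix (Fin n) (Fin n) ℂ) :=
    ContinuousLinearMap.toNormedAlgebra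
  have hcomp : CompleteSpace (Matrix (Fin n) (Fin n) ℂ →L[ℂ] Matrix (Fin n) (Fin n) ℂ) := by
    haveI h1 : IsUniformAddGroup (Matrix (Fin n) (Fin n) ℂ →L[ℂ] Matrix (Fin n) (Fin n) ℂ) :=
      SeminormedAddCommGroup.to_isUniformAddGroup
    haveI h2 : IsBoundedSMul ℂ (Matrix (Fin n) (Fin n) ℂ →L[ℂ] Matrix (Fin n) (Fin n) ℂ) :=
      NormedSpace.toIsBoundedSMul
    haveI h3 : ContinuousSMul ℂ (Matrix (Fin n) (Fin n) ℂ →L[ℂ] Matrix (Fin n) (Fin n) ℂ) :=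
      IsBoundedSMul.continuousSMul
    haveI h4 : FiniteDimensional ℂ (Matrix (Fin n) (Fin n) ℂ →L[ℂ] Matrix (Fin n) (Fin n) ℂ) :=
      ContinuousLinearMap.finiteDimensional
    exact FiniteDimensional.complete ℂ _
  have e1 := @zeno_expK (Matrix (Fin n) (Fin n) ℂ →L[ℂ] Matrix (Fin n) (Fin n) ℂ) _ _
    (by exact hcomp) Ω 𝒬 𝒦 (fun ω _ ω' _ => hQmulC ω ω') hQsumC hKsC'
  have e2 := @zeno_abstract (Matrix (Fin n) (Fin n) ℂ →L[ℂ] Matrix (Fin n) (Fin n) ℂ) _ _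
    (by exact hcomp) Ω 𝒬 𝒦 ℒ (fun ω _ ω' _ => hQmulC ω ω') hQsumC hKsC' T hT e1
  exact e2
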